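/- Let R be a ring. The following are equivalent: (1) R is semiprime; (2) for every two ideals I, J of R, l(IJ) = l(I ∩ J); (3) for every two ideals I, J of R, r(l(IJ)) = r(l(I ∩ J)) = r(l(I)) ∩ r(l(J)). -/

import Mathlib

open TwoSidedIdeal

/-- Left annihilator of a set: `l(S) = {x | ∀ s ∈ S, x*s = 0}`. -/
def lAnn (R : Type*) [Ring R] (S : Set R) : Set R := {x | ∀ s ∈ S, x * s = 0}

/-- Right annihilator of a set: `r(S) = {x | ∀ s ∈ S, s*x = 0}`. -/
def rAnn (R : Type*) [Ring R] (S : Set R) : Set R := {x | ∀ s ∈ S, s * x = 0}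

/-- A ring is semiprime if `I² = 0` implies `I = 0` for every two-sided ideal `I`. -/
def IsSemiprimeRing (R : Type*) [Ring R] : Prop :=
  ∀ I : TwoSidedIdeal R, (∀ a ∈ I, ∀ b ∈ I, a * b = 0) → I = ⊥

/-- A two-sided ideal `P` is prime if it is proper and `IJ ⊆ P` implies `I ⊆ P` or `J ⊆ P`. -/
def IsPrimeTSI {R : Type*} [Ring R] (P : TwoSidedIdeal R) : Prop :=
  P ≠ ⊤ ∧ ∀ I J : TwoSidedIdeal R, (∀ a ∈ I, ∀ b ∈ J, a * b ∈ P) → I ≤ P ∨ J ≤ P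

/-- A minimal prime ideal: a prime two-sided ideal minimal among primes. -/
def IsMinPrime {R : Type*} [Ring R] (P : TwoSidedIdeal R) : Prop :=
  IsPrimeTSI P ∧ ∀ Q : TwoSidedIdeal R, IsPrimeTSI Q → Q ≤ P → Q = P

/-- `Pmin R B` is the intersection of all minimal prime ideals of `R` containing the set `B`
(equal to all of `R` if there are none). -/
def Pmin (R : Type*) [Ring R] (B : Set R) : Set R :=
  ⋂ P ∈ {P : TwoSidedIdeal R | IsMinPrime P ∧ B ⊆ (P : Set R)}, (P : Set R)

/-- `Pa a` : the intersection of all minimal prime ideals containing `a`. -/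
def Pa {R : Type*} [Ring R] (a : R) : Set R := Pmin R {a}

/-- An ideal `I` is a z°-ideal if `P_a ⊆ I` for every `a ∈ I`. -/
def IsZoIdeal {R : Type*} [Ring R] (I : TwoSidedIdeal R) : Prop :=
  ∀ a ∈ I, Pa a ⊆ (I : Set R)

/-- An ideal `I` is a right d-ideal if `r(l(RaR)) ⊆ I` for every `a ∈ I`. -/
def IsRightDIdeal {R : Type*} [Ring R] (I : TwoSidedIdeal R) : Prop :=
  ∀ a ∈ I, rAnn R (lAnn R (span {a} : Set R)) ⊆ (I : Set R)

/-- An ideal `I` is a right annihilator ideal if `I = r(l(I))`. -/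
def IsRightAnnIdeal {R : Type*} [Ring R] (I : TwoSidedIdeal R) : Prop :=
  (I : Set R) = rAnn R (lAnn R (I : Set R))

/-- The set of products `{ab : a ∈ I, b ∈ J}`. -/
def mulSet {R : Type*} [Ring R] (I J : Set R) : Set R := {x | ∃ a ∈ I, ∃ b ∈ J, x = a * b}

/-- The product `IJ` of two two-sided ideals: the ideal generated by products `ab`,
`a ∈ I`, `b ∈ J`. -/
def prodIdeal {R : Type*} [Ring R] (I J : TwoSidedIdeal R) : TwoSidedIdeal R :=
  span (mulSet (I : Set R) (J : Set R))

section AuxLemmas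
variable {R : Type*} [Ring R]

/-- Semiprime rings have no nonzero `c` with `cRc = 0`. -/
lemma semiprime_elt (h : IsSemiprimeRing R)
    {c : R} (hc : ∀ r : R, c * r * c = 0) : c = 0 := by
  set S : Set R := {x | ∃ r s : R, x = r * c * s} with hS
  have hleft : ∀ t : R, ∀ y ∈ AddSubgroup.closure S, t * y ∈ AddSubgroup.closure S := by
    intro t y hy
    induction hy using AddSubgroup.closure_induction with
    | mem x hx => obtain ⟨r, s, rfl⟩ := hx; exact AddSubgroup.subset_closure ⟨t * r, s, by noncomm_ring⟩
    | zero => simpa using (AddSubgroup.closure S).zero_mem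
    | add x y hx hy ihx ihy => simpa [mul_add] using (AddSubgroup.closure S).add_mem ihx ihy
    | neg x hx ihx => simpa [mul_neg] using (AddSubgroup.closure S).neg_mem ihx
  have hright : ∀ t : R, ∀ y ∈ AddSubgroup.closure S, y * t ∈ AddSubgroup.closure S := by
    intro t y hy
    induction hy using AddSubgroup.closure_induction with
    | mem x hx => obtain ⟨r, s, rfl⟩ := hx; exact AddSubgroup.subset_closure ⟨r, s * t, by noncomm_ring⟩
    | zero => simpa using (AddSubgroup.closure S).zero_mem
    | add x y hx hy ihx ihy => simpa [add_mul] using (AddSubgroup.closure S).add_mem ihx ihy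
    | neg x hx ihx => simpa [neg_mul] using (AddSubgroup.closure S).neg_mem ihx
  set T : TwoSidedIdeal R := TwoSidedIdeal.mk' (AddSubgroup.closure S : Set R)
    (AddSubgroup.closure S).zero_mem (fun hx hy => (AddSubgroup.closure S).add_mem hx hy)
    (fun hx => (AddSubgroup.closure S).neg_mem hx)
    (fun {x y} hy => hleft x y hy) (fun {x y} hx => hright y x hx) with hT
  have hsq : ∀ a ∈ T, ∀ b ∈ T, a * b = 0 := by
    intro a ha b hb
    rw [hT, TwoSidedIdeal.mem_mk'] at ha hb
    induction ha, hb using AddSubgroup.closure_induction₂ with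
    | mem x y hx hy =>
      obtain ⟨r, s, rfl⟩ := hx; obtain ⟨r', s', rfl⟩ := hy
      have : r * c * s * (r' * c * s') = r * (c * (s * r') * c) * s' := by noncomm_ring
      rw [this, hc, mul_zero, zero_mul]
    | zero_left x hx => simp
    | zero_right x hx => simp
    | add_left x y z hx hy hz ih1 ih2 => rw [add_mul, ih1, ih2, add_zero]
    | add_right y z x hy hz hx ih1 ih2 => rw [mul_add, ih1, ih2, add_zero]
    | neg_left x y hx hy ih => rw [neg_mul, ih, neg_zero]
    | neg_right x y hx hy ih => rw [mul_neg, ih, neg_zero]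
  have hc' : c ∈ T := by
    rw [hT, TwoSidedIdeal.mem_mk']
    exact AddSubgroup.subset_closure ⟨1, 1, by noncomm_ring⟩
  rw [h T hsq] at hc'
  exact (TwoSidedIdeal.mem_bot (R := R)).mp hc'

lemma prodIdeal_le_inf (I J : TwoSidedIdeal R) {s : R}
    (hs : s ∈ prodIdeal I J) : s ∈ I ⊓ J := by
  refine mem_span_iff.mp hs (I ⊓ J) ?_
  rintro m ⟨a, ha, b, hb, rfl⟩
  rw [SetLike.mem_coe, TwoSidedIdeal.mem_inf]
  exact ⟨I.mul_mem_right a b ha, J.mul_mem_left a b hb⟩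

/-- (1) → (2), as an equation of annihilators. -/
lemma key12 (h : IsSemiprimeRing R) (I J : TwoSidedIdeal R) :
    lAnn R (prodIdeal I J : Set R) = lAnn R ((I ⊓ J : TwoSidedIdeal R) : Set R) := by
  ext x
  constructor
  · intro hx a ha
    rw [SetLike.mem_coe, TwoSidedIdeal.mem_inf] at ha
    apply semiprime_elt h
    intro r
    have hm : a * ((r * x) * a) ∈ prodIdeal I J :=
      subset_span ⟨a, ha.1, (r * x) * a, J.mul_mem_left _ _ ha.2, rfl⟩
    have h0 := hx _ (SetLike.mem_coe.mpr hm)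
    calc x * a * r * (x * a) = x * (a * ((r * x) * a)) := by noncomm_ring
    _ = 0 := h0
  · intro hx s hs
    exact hx s (SetLike.mem_coe.mpr (prodIdeal_le_inf I J (SetLike.mem_coe.mp hs)))

/-- the double annihilator `r(l(I))` as a two-sided ideal. -/
def dcl (I : TwoSidedIdeal R) : TwoSidedIdeal R :=
  TwoSidedIdeal.mk' (rAnn R (lAnn R (I : Set R)))
    (fun s _ => mul_zero s)
    (fun hx hy s hs => by rw [mul_add, hx s hs, hy s hs, add_zero])
    (fun hx s hs => by rw [mul_neg, hx s hs, neg_zero])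
    (fun {t x} hx s hs => by
      have hst : s * t ∈ lAnn R (I : Set R) := by
        intro u hu
        rw [mul_assoc]
        exact hs _ (SetLike.mem_coe.mpr (I.mul_mem_left t u (SetLike.mem_coe.mp hu)))
      rw [← mul_assoc]
      exact hx _ hst)
    (fun {x t} hx s hs => by rw [← mul_assoc, hx s hs, zero_mul])

lemma mem_dcl {I : TwoSidedIdeal R} {x : R} :
    x ∈ dcl I ↔ x ∈ rAnn R (lAnn R (I : Set R)) := by
  exact TwoSidedIdeal.mem_mk' _ _ _ _ _ _ x

/-- If `y` kills all products `a*b`, `a ∈ A`, `b ∈ B`, then `y ∈ l(AB)`. -/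
lemma mem_lAnn_prod {y : R} {A B : TwoSidedIdeal R}
    (hgen : ∀ a ∈ A, ∀ b ∈ B, y * (a * b) = 0) :
    y ∈ lAnn R (prodIdeal A B : Set R) := by
  set K : TwoSidedIdeal R := TwoSidedIdeal.mk' {s : R | ∀ r : R, y * (r * s) = 0}
    (fun r => by rw [mul_zero, mul_zero])
    (fun {x y'} hx hy r => by rw [mul_add, mul_add, hx r, hy r, add_zero])
    (fun {x} hx r => by rw [mul_neg, mul_neg, hx r, neg_zero])
    (fun {t x} hx r => by rw [show r * (t * x) = (r * t) * x from (mul_assoc r t x).symm]; exact hx (r * t))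
    (fun {x t} hx r => by
      rw [show r * (x * t) = (r * x) * t from (mul_assoc r x t).symm, ← mul_assoc, hx r, zero_mul])
    with hK
  intro s hs
  have hsK : s ∈ K := by
    refine mem_span_iff.mp (SetLike.mem_coe.mp hs) K ?_
    rintro m ⟨a, ha, b, hb, rfl⟩
    rw [hK, SetLike.mem_coe, TwoSidedIdeal.mem_mk']
    intro r
    rw [show r * (a * b) = (r * a) * b from (mul_assoc r a b).symm]
    exact hgen _ (A.mul_mem_left r a (SetLike.mem_coe.mp ha)) b (SetLike.mem_coe.mp hb)
  rw [hK, TwoSidedIdeal.mem_mk'] at hsK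
  have := hsK 1
  rwa [one_mul] at this

/-- (1) → second equation of (3). -/
lemma key13 (h : IsSemiprimeRing R) (I J : TwoSidedIdeal R) :
    rAnn R (lAnn R ((I ⊓ J : TwoSidedIdeal R) : Set R)) =
      rAnn R (lAnn R (I : Set R)) ∩ rAnn R (lAnn R (J : Set R)) := by
  ext x
  constructor
  · intro hx
    constructor
    · intro z hz
      exact hx z (fun s hs => hz s
        (SetLike.mem_coe.mpr ((TwoSidedIdeal.mem_inf _).mp (SetLike.mem_coe.mp hs)).1))
    · intro z hz
      exact hx z (fun s hs => hz s
        (SetLike.mem_coe.mpr ((TwoSidedIdeal.mem_inf _).mp (SetLike.mem_coe.mp hs)).2))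
  · rintro ⟨hxA, hxB⟩ y hy
    -- hy : y ∈ lAnn (I ⊓ J); goal : y * x = 0
    set A : TwoSidedIdeal R := dcl I with hA
    set B : TwoSidedIdeal R := dcl J with hB
    -- step i
    have step1 : ∀ u ∈ I, ∀ b ∈ B, (y * u) * b = 0 := by
      intro u hu b hb
      have hyu : y * u ∈ lAnn R (J : Set R) := by
        intro j hj
        rw [mul_assoc]
        refine hy _ (SetLike.mem_coe.mpr ((TwoSidedIdeal.mem_inf _).mpr
          ⟨I.mul_mem_right u j hu, J.mul_mem_left u j (SetLike.mem_coe.mp hj)⟩))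
      exact (mem_dcl.mp hb) _ hyu
    -- step ii
    have step2 : ∀ b ∈ B, ∀ u ∈ I, b * (y * u) = 0 := by
      intro b hb u hu
      apply semiprime_elt h
      intro r
      have h1 : (y * (u * r)) * b = 0 := step1 _ (I.mul_mem_right u r hu) b hb
      calc b * (y * u) * r * (b * (y * u))
          = b * ((y * (u * r)) * b) * (y * u) := by noncomm_ring
        _ = 0 := by rw [h1, mul_zero, zero_mul]
    -- step iii
    have step3 : ∀ b ∈ B, ∀ a ∈ A, (b * y) * a = 0 := by
      intro b hb a ha
      have hby : b * y ∈ lAnn R (I : Set R) := by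
        intro u hu
        rw [mul_assoc]
        exact step2 b hb u (SetLike.mem_coe.mp hu)
      exact (mem_dcl.mp ha) _ hby
    -- step iv
    have step4 : ∀ a ∈ A, ∀ b ∈ B, y * (a * b) = 0 := by
      intro a ha b hb
      have : (y * a) * b = 0 := by
        apply semiprime_elt h
        intro r
        have h1 : ((b * r) * y) * a = 0 := step3 _ (B.mul_mem_right b r hb) a ha
        calc y * a * b * r * (y * a * b)
            = (y * a) * (((b * r) * y) * a) * b := by noncomm_ring
          _ = 0 := by rw [h1, mul_zero, zero_mul]
      rwa [← mul_assoc]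
    -- step v : y ∈ l(AB) = l(A ⊓ B)
    have step5 : y ∈ lAnn R ((A ⊓ B : TwoSidedIdeal R) : Set R) := by
      rw [← key12 h A B]
      exact mem_lAnn_prod step4
    -- conclude
    refine step5 x (SetLike.mem_coe.mpr ((TwoSidedIdeal.mem_inf _).mpr ?_))
    exact ⟨mem_dcl.mpr hxA, mem_dcl.mpr hxB⟩

/-- If all pairwise products inside `I` vanish, `l(I ⊓ I)` contains `1` iff ... helper for
(2) → (1) and (3) → (1): `lAnn (prodIdeal I I) = univ`. -/
lemma lAnn_prod_self_univ {I : TwoSidedIdeal R}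
    (hI : ∀ a ∈ I, ∀ b ∈ I, a * b = 0) :
    ∀ x : R, x ∈ lAnn R (prodIdeal I I : Set R) := by
  intro x s hs
  have hs0 : s = 0 := by
    have : s ∈ (⊥ : TwoSidedIdeal R) := by
      refine mem_span_iff.mp (SetLike.mem_coe.mp hs) ⊥ ?_
      rintro m ⟨a, ha, b, hb, rfl⟩
      rw [SetLike.mem_coe, TwoSidedIdeal.mem_bot]
      exact hI a (SetLike.mem_coe.mp ha) b (SetLike.mem_coe.mp hb)
    exact (TwoSidedIdeal.mem_bot (R := R)).mp this
  rw [hs0, mul_zero]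

end AuxLemmas

/-- Lemma 5.1: `R` is semiprime iff `l(IJ) = l(I ∩ J)` for all ideals `I, J`, iff
`r(l(IJ)) = r(l(I ∩ J)) = r(l(I)) ∩ r(l(J))` for all ideals `I, J`. -/
theorem stmt11 (R : Type*) [Ring R] :
    List.TFAE [
      IsSemiprimeRing R,
      ∀ I J : TwoSidedIdeal R,
        lAnn R (prodIdeal I J : Set R) = lAnn R ((I ⊓ J : TwoSidedIdeal R) : Set R),
      ∀ I J : TwoSidedIdeal R,
        rAnn R (lAnn R (prodIdeal I J : Set R)) =
            rAnn R (lAnn R ((I ⊓ J : TwoSidedIdeal R) : Set R)) ∧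
          rAnn R (lAnn R ((I ⊓ J : TwoSidedIdeal R) : Set R)) =
            rAnn R (lAnn R (I : Set R)) ∩ rAnn R (lAnn R (J : Set R)) ] := by
  tfae_have 1 → 2
  · exact fun h I J => key12 h I J
  tfae_have 1 → 3
  · intro h I J
    exact ⟨by rw [key12 h I J], key13 h I J⟩
  tfae_have 2 → 1
  · intro h2 I hI
    have h1 : (1 : R) ∈ lAnn R ((I ⊓ I : TwoSidedIdeal R) : Set R) := by
      rw [← h2 I I]
      exact lAnn_prod_self_univ hI 1
    refine SetLike.ext fun a => ⟨fun ha => ?_, fun ha => ?_⟩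
    · rw [TwoSidedIdeal.mem_bot]
      have := h1 a (SetLike.mem_coe.mpr ((TwoSidedIdeal.mem_inf _).mpr ⟨ha, ha⟩))
      rwa [one_mul] at this
    · rw [TwoSidedIdeal.mem_bot] at ha
      rw [ha]; exact I.zero_mem
  tfae_have 3 → 1
  · intro h3 I hI
    have hr : ∀ x ∈ rAnn R (lAnn R ((I ⊓ I : TwoSidedIdeal R) : Set R)), x = 0 := by
      intro x hx
      rw [← (h3 I I).1] at hx
      have := hx 1 (lAnn_prod_self_univ hI 1)
      rwa [one_mul] at this
    refine SetLike.ext fun a => ⟨fun ha => ?_, fun ha => ?_⟩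
    · rw [TwoSidedIdeal.mem_bot]
      refine hr a ?_
      intro z hz
      exact hz a (SetLike.mem_coe.mpr ((TwoSidedIdeal.mem_inf _).mpr ⟨ha, ha⟩))
    · rw [TwoSidedIdeal.mem_bot] at ha
      rw [ha]; exact I.zero_mem
  tfae_finish
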